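/- Let X be a real normed space with X ≠ {0}, let U ⊆ X be open and convex, and let f : U → ℝ be twice continuously Fréchet differentiable. Let C ⊆ X be convex with C ∩ U ≠ ∅. Assume the second derivative f'' is bounded on every bounded subset of C ∩ U and uniformly continuous on every bounded subset of C ∩ U. Fix y₀ ∈ C ∩ U and set s₀ := ‖f''(y₀)‖. If sup{‖f''(x)‖ : x ∈ C ∩ U} = ∞, then for every strictly increasing sequence (λ_k)_{k≥1} of positive real numbers with λ₁ > s₀ and λ_k → ∞, there exists a sequence (S_k)_{k≥1} of bounded convex subsets of C, increasing with respect to inclusion (and each S_k closed if C is closed), such that: S_k ∩ U ≠ ∅ for every k; ⋃_{k≥1} S_k = C; for every k, the derivative f' is Lipschitz continuous on S_k ∩ U with λ_k as a Lipschitz constant, i.e., ‖f'(x) − f'(y)‖ ≤ λ_k‖x − y‖ for all x,y ∈ S_k ∩ U; and if C contains more than one point, then each S_k ∩ U contains more than one point. -/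

import Mathlib

/-- **A sequence of Lipschitz constants for the derivative.**
Let `X ≠ {0}` be a real normed space, `U ⊆ X` open and convex, `f : U → ℝ` twice
continuously Fréchet differentiable, and `C ⊆ X` convex with `C ∩ U ≠ ∅`. Assume `f''`
is bounded and uniformly continuous on bounded subsets of `C ∩ U`. Fix `y₀ ∈ C ∩ U` and
set `s₀ := ‖f''(y₀)‖`. If `sup {‖f''(x)‖ : x ∈ C ∩ U} = ∞`, then for every strictly
increasing sequence `(λ_k)` of positive numbers with `λ₀ > s₀` and `λ_k → ∞`, there is
an increasing sequence `(S_k)` of bounded convex subsets of `C` (closed if `C` is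
closed) with `S_k ∩ U ≠ ∅`, `⋃ S_k = C`, `f'` Lipschitz continuous on `S_k ∩ U` with
constant `λ_k`, and each `S_k ∩ U` containing more than one point whenever `C` does. -/
theorem lipschitz_constants_sequence {X : Type*}
    [NormedAddCommGroup X] [NormedSpace ℝ X] [Nontrivial X]
    (U : Set X) (hUopen : IsOpen U) (hUconv : Convex ℝ U)
    (f : X → ℝ) (hf : ContDiffOn ℝ 2 f U)
    (C : Set X) (hCconv : Convex ℝ C) (hCU : (C ∩ U).Nonempty)
    (hbdd : ∀ B ⊆ C ∩ U, Bornology.IsBounded B →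
      ∃ M : ℝ, ∀ x ∈ B, ‖fderiv ℝ (fderiv ℝ f) x‖ ≤ M)
    (huc : ∀ B ⊆ C ∩ U, Bornology.IsBounded B → ∀ ε : ℝ, 0 < ε → ∃ δ : ℝ, 0 < δ ∧
      ∀ x ∈ B, ∀ y ∈ B, ‖x - y‖ < δ →
        ‖fderiv ℝ (fderiv ℝ f) x - fderiv ℝ (fderiv ℝ f) y‖ < ε)
    (y₀ : X) (hy₀ : y₀ ∈ C ∩ U)
    (hsup : ∀ M : ℝ, ∃ x ∈ C ∩ U, M < ‖fderiv ℝ (fderiv ℝ f) x‖)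
    (lam : ℕ → ℝ) (hmono : StrictMono lam) (hpos : ∀ k : ℕ, 0 < lam k)
    (hlam0 : ‖fderiv ℝ (fderiv ℝ f) y₀‖ < lam 0)
    (hto : Filter.Tendsto lam Filter.atTop Filter.atTop) :
    ∃ S : ℕ → Set X,
      (∀ k : ℕ, Bornology.IsBounded (S k)) ∧
      (∀ k : ℕ, Convex ℝ (S k)) ∧
      (∀ k : ℕ, S k ⊆ C) ∧
      Monotone S ∧
      (IsClosed C → ∀ k : ℕ, IsClosed (S k)) ∧
      (∀ k : ℕ, (S k ∩ U).Nonempty) ∧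
      (⋃ k : ℕ, S k) = C ∧
      (∀ k : ℕ, ∀ x ∈ S k ∩ U, ∀ y ∈ S k ∩ U,
        ‖fderiv ℝ f x - fderiv ℝ f y‖ ≤ lam k * ‖x - y‖) ∧
      ((∃ a ∈ C, ∃ b ∈ C, a ≠ b) →
        ∀ k : ℕ, ∃ a ∈ S k ∩ U, ∃ b ∈ S k ∩ U, a ≠ b) := by
  classical
  obtain ⟨hy₀C, hy₀U⟩ := hy₀
  -- differentiability of f' on U
  have hC1 : ContDiffOn ℝ 1 (fderiv ℝ f) U := hf.fderiv_of_isOpen hUopen (by norm_num)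
  have hder : ∀ x ∈ U, HasFDerivAt (fderiv ℝ f) (fderiv ℝ (fderiv ℝ f) x) x := by
    intro x hx
    exact ((hC1.differentiableOn one_ne_zero x hx).differentiableAt
      (hUopen.mem_nhds hx)).hasFDerivAt
  -- bounds M n on balls of radius n
  have hMn : ∀ n : ℕ, ∃ M : ℝ, ∀ x ∈ C ∩ U ∩ Metric.closedBall y₀ n,
      ‖fderiv ℝ (fderiv ℝ f) x‖ ≤ M := fun n =>
    hbdd _ Set.inter_subset_left (Metric.isBounded_closedBall.subset Set.inter_subset_right)
  choose M hM using hMn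
  -- base radius δ₀
  obtain ⟨δ, hδpos, hδ⟩ := huc (C ∩ U ∩ Metric.closedBall y₀ 1) Set.inter_subset_left
    (Metric.isBounded_closedBall.subset Set.inter_subset_right)
    (lam 0 - ‖fderiv ℝ (fderiv ℝ f) y₀‖) (by linarith)
  set δ₀ : ℝ := min (δ / 2) 1 with hδ₀def
  have hδ₀pos : 0 < δ₀ := lt_min (by linarith) one_pos
  have hδ₀le1 : δ₀ ≤ 1 := min_le_right _ _
  have hδ₀ltδ : δ₀ < δ := lt_of_le_of_lt (min_le_left _ _) (by linarith)
  -- small-ball bound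
  have hsmall : ∀ x ∈ C ∩ U ∩ Metric.closedBall y₀ δ₀,
      ‖fderiv ℝ (fderiv ℝ f) x‖ ≤ lam 0 := by
    rintro x ⟨hxCU, hxb⟩
    have hx1 : x ∈ C ∩ U ∩ Metric.closedBall y₀ 1 :=
      ⟨hxCU, Metric.closedBall_subset_closedBall hδ₀le1 hxb⟩
    have hy1 : y₀ ∈ C ∩ U ∩ Metric.closedBall y₀ 1 :=
      ⟨⟨hy₀C, hy₀U⟩, Metric.mem_closedBall_self one_pos.le⟩
    have hdist : ‖x - y₀‖ < δ := by
      have : ‖x - y₀‖ ≤ δ₀ := by rw [← dist_eq_norm]; exact hxb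
      linarith
    have h1 := hδ x hx1 y₀ hy1 hdist
    have h2 := norm_sub_norm_le (fderiv ℝ (fderiv ℝ f) x) (fderiv ℝ (fderiv ℝ f) y₀)
    linarith
  -- the radius sequence
  set r : ℕ → ℕ := fun k => Nat.findGreatest (fun n => M n ≤ lam k) k with hrdef
  have hrP : ∀ k, r k ≠ 0 → M (r k) ≤ lam k := by
    intro k hk
    have h := (Nat.findGreatest_eq_zero_iff (P := fun n => M n ≤ lam k)).not.mp hk
    push_neg at h
    obtain ⟨n, hn0, hnk, hnP⟩ := h
    exact Nat.findGreatest_spec (P := fun n => M n ≤ lam k) hnk hnP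
  have hrmono : Monotone r := by
    apply monotone_nat_of_le_succ
    intro k
    by_cases hk : r k = 0
    · simp [hk]
    · exact Nat.le_findGreatest (le_trans (Nat.findGreatest_le k) (Nat.le_succ k))
        (le_trans (hrP k hk) (hmono (Nat.lt_succ_self k)).le)
  have hrge : ∀ n : ℕ, ∃ K : ℕ, ∀ k ≥ K, n ≤ r k := by
    intro n
    obtain ⟨K, hK⟩ := Filter.eventually_atTop.mp (hto.eventually_ge_atTop (M n))
    refine ⟨max K n, fun k hk => ?_⟩
    exact Nat.le_findGreatest (le_trans (le_max_right K n) hk)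
      (hK k (le_trans (le_max_left K n) hk))
  set ρ : ℕ → ℝ := fun k => max δ₀ (r k) with hρdef
  have hρpos : ∀ k, 0 < ρ k := fun k => lt_max_of_lt_left hδ₀pos
  set S : ℕ → Set X := fun k => C ∩ Metric.closedBall y₀ (ρ k) with hSdef
  -- key bound on the working sets
  have hbound : ∀ k, ∀ x ∈ C ∩ U ∩ Metric.closedBall y₀ (ρ k),
      ‖fderiv ℝ (fderiv ℝ f) x‖ ≤ lam k := by
    intro k x hx
    by_cases hk : r k = 0
    · have hρk : ρ k = δ₀ := by
        have : ((r k : ℕ) : ℝ) = 0 := by exact_mod_cast hk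
        simp [hρdef, this, hδ₀pos.le]
      exact le_trans (hsmall x (by rwa [hρk] at hx)) (hmono.monotone (Nat.zero_le k))
    · have h1 : (1 : ℝ) ≤ (r k : ℝ) := by exact_mod_cast Nat.one_le_iff_ne_zero.mpr hk
      have hρk : ρ k = (r k : ℝ) := max_eq_right (le_trans hδ₀le1 h1)
      exact le_trans (hM (r k) x (by rwa [hρk] at hx)) (hrP k hk)
  -- y₀ is in every S k ∩ U
  have hy₀S : ∀ k, y₀ ∈ S k ∩ U :=
    fun k => ⟨⟨hy₀C, Metric.mem_closedBall_self (hρpos k).le⟩, hy₀U⟩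
  -- second point when C has two points
  have htwo : (∃ a ∈ C, ∃ b ∈ C, a ≠ b) →
      ∃ z, z ∈ C ∧ z ∈ U ∧ z ≠ y₀ ∧ ‖z - y₀‖ ≤ δ₀ := by
    rintro ⟨a, ha, b, hb, hab⟩
    obtain ⟨w, hwC, hw⟩ : ∃ w ∈ C, w ≠ y₀ := by
      by_cases h : a = y₀
      · exact ⟨b, hb, fun hby => hab (by rw [h, hby])⟩
      · exact ⟨a, ha, h⟩
    obtain ⟨r', hr'pos, hr'⟩ := Metric.isOpen_iff.mp hUopen y₀ hy₀U
    have hc : 0 < ‖w - y₀‖ := by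
      rw [norm_pos_iff]; exact sub_ne_zero.mpr hw
    set t : ℝ := min 1 (min (r' / 2) δ₀ / ‖w - y₀‖) with ht
    have htpos : 0 < t := lt_min one_pos (div_pos (lt_min (by linarith) hδ₀pos) hc)
    have ht1 : t ≤ 1 := min_le_left _ _
    have htc : t * ‖w - y₀‖ ≤ min (r' / 2) δ₀ := by
      calc t * ‖w - y₀‖ ≤ (min (r' / 2) δ₀ / ‖w - y₀‖) * ‖w - y₀‖ :=
            mul_le_mul_of_nonneg_right (min_le_right _ _) hc.le
        _ = min (r' / 2) δ₀ := div_mul_cancel₀ _ hc.ne'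
    have hnorm : ‖y₀ + t • (w - y₀) - y₀‖ = t * ‖w - y₀‖ := by
      have h1 : y₀ + t • (w - y₀) - y₀ = t • (w - y₀) := by abel
      rw [h1, norm_smul, Real.norm_eq_abs, abs_of_pos htpos]
    refine ⟨y₀ + t • (w - y₀), ?_, ?_, ?_, ?_⟩
    · have h := hCconv hy₀C hwC (by linarith : (0:ℝ) ≤ 1 - t) htpos.le (by ring)
      have heq : (1 - t) • y₀ + t • w = y₀ + t • (w - y₀) := by
        rw [smul_sub, sub_smul, one_smul]; abel
      rwa [heq] at h
    · apply hr'
      rw [Metric.mem_ball, dist_eq_norm, hnorm]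
      have := le_trans htc (min_le_left _ _)
      linarith
    · intro h
      have h0 : t • (w - y₀) = 0 := by
        have := congrArg (fun z => z - y₀) h
        simpa using this
      rcases smul_eq_zero.mp h0 with h1 | h1
      · exact htpos.ne' h1
      · exact hw (sub_eq_zero.mp h1)
    · rw [hnorm]; exact le_trans htc (min_le_right _ _)
  refine ⟨S, ?_, ?_, ?_, ?_, ?_, ?_, ?_, ?_, ?_⟩
  · exact fun k => Metric.isBounded_closedBall.subset Set.inter_subset_right
  · exact fun k => hCconv.inter (convex_closedBall _ _)
  · exact fun k => Set.inter_subset_left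
  · intro k l hkl
    refine Set.inter_subset_inter_right _ (Metric.closedBall_subset_closedBall ?_)
    exact max_le_max le_rfl (by exact_mod_cast hrmono hkl)
  · exact fun hC k => hC.inter Metric.isClosed_closedBall
  · exact fun k => ⟨y₀, hy₀S k⟩
  · apply Set.Subset.antisymm
    · exact Set.iUnion_subset fun k => Set.inter_subset_left
    · intro c hc
      obtain ⟨K, hK⟩ := hrge ⌈‖c - y₀‖⌉₊
      refine Set.mem_iUnion.mpr ⟨K, hc, ?_⟩
      rw [Metric.mem_closedBall, dist_eq_norm]
      have h1 : ‖c - y₀‖ ≤ (⌈‖c - y₀‖⌉₊ : ℝ) := Nat.le_ceil _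
      have h2 : ((⌈‖c - y₀‖⌉₊ : ℕ) : ℝ) ≤ (r K : ℝ) := by exact_mod_cast hK K le_rfl
      exact le_trans h1 (le_trans h2 (le_max_right _ _))
  · intro k x hx y hy
    set D := C ∩ U ∩ Metric.closedBall y₀ (ρ k) with hD
    have hDconv : Convex ℝ D := (hCconv.inter hUconv).inter (convex_closedBall _ _)
    have hxD : x ∈ D := ⟨⟨hx.1.1, hx.2⟩, hx.1.2⟩
    have hyD : y ∈ D := ⟨⟨hy.1.1, hy.2⟩, hy.1.2⟩
    exact Convex.norm_image_sub_le_of_norm_hasFDerivWithin_le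
      (fun z hz => (hder z hz.1.2).hasFDerivWithinAt)
      (fun z hz => hbound k z hz) hDconv hyD hxD
  · intro h k
    obtain ⟨z, hzC, hzU, hzne, hzd⟩ := htwo h
    refine ⟨z, ⟨⟨hzC, ?_⟩, hzU⟩, y₀, hy₀S k, hzne⟩
    rw [Metric.mem_closedBall, dist_eq_norm]
    exact le_trans hzd (le_max_left _ _)
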